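/- arXiv:1003.0350 — 2 statements merged into one kernel-verified Lean document; each statement's English description precedes it below -/
import Mathlib

section
/- Let W = A_m wr B_m be the abelian wreath product and let F be the Lie subalgebra generated by y_i = a_i + b_i. For an element f = ∑_{p>q} [y_p, y_q]·h_{pq}(ad y_q,…,ad y_m) of the derived subalgebra of F, one has f = ∑_i a_i f_i where the 'partial derivative' f_i = ∂f/∂y_i is given by f_i(t₁,…,t_m) = ∑_{q<i} t_q h_{iq}(t_q,…,t_m) − ∑_{p>i} t_p h_{pi}(t_i,…,t_m). -/
open MvPolynomial

variable (K : Type*) [Field K] (m : ℕ)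

/-- The underlying space of the abelian wreath product `A_m wr B_m = C_m ⋊ B_m`. -/
abbrev WreathCarrier := (Fin m → MvPolynomial (Fin m) K) × (Fin m → K)

/-- `∑ⱼ βⱼ tⱼ`. -/
noncomputable def tvec (β : Fin m → K) : MvPolynomial (Fin m) K :=
  ∑ j : Fin m, MvPolynomial.C (β j) * MvPolynomial.X j

lemma tvec_add (β γ : Fin m → K) :
    tvec K m (β + γ) = tvec K m β + tvec K m γ := by
  simp [tvec, add_mul, Finset.sum_add_distrib]

lemma tvec_zero : tvec K m 0 = 0 := by simp [tvec]

/-- The Lie ring structure of the abelian wreath product `A_m wr B_m`, determined by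
`[C_m,C_m] = [B_m,B_m] = 0` and `[aᵢ f, bⱼ] = aᵢ f tⱼ`. -/
noncomputable instance : LieRing (WreathCarrier K m) where
  bracket x y := (fun i => x.1 i * tvec K m y.2 - y.1 i * tvec K m x.2, 0)
  add_lie x y z := by
    refine Prod.ext ?_ (by simp)
    funext i
    simp [tvec_add, Prod.fst_add, Prod.snd_add, Pi.add_apply]
    ring
  lie_add x y z := by
    refine Prod.ext ?_ (by simp)
    funext i
    simp [tvec_add, Prod.fst_add, Prod.snd_add, Pi.add_apply]
    ring
  lie_self x := by
    refine Prod.ext ?_ rfl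
    funext i
    simp
  leibniz_lie x y z := by
    refine Prod.ext ?_ (by simp)
    funext i
    simp [tvec_zero]
    ring

lemma tvec_smul (c : K) (β : Fin m → K) :
    tvec K m (c • β) = MvPolynomial.C c * tvec K m β := by
  simp [tvec, Finset.mul_sum, mul_assoc]

lemma wr_bracket_def (x y : WreathCarrier K m) :
    ⁅x, y⁆ = (fun i => x.1 i * tvec K m y.2 - y.1 i * tvec K m x.2, (0 : Fin m → K)) :=
  rfl

/-- The Lie algebra structure of `A_m wr B_m` over `K`. -/
noncomputable instance : LieAlgebra K (WreathCarrier K m) where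
  lie_smul c x y := by
    refine Prod.ext ?_ (by simp [wr_bracket_def])
    funext i
    simp [wr_bracket_def, tvec_smul, MvPolynomial.smul_eq_C_mul, smul_sub]
    ring

/-- The generators `yᵢ = aᵢ + bᵢ` of Shmel'kin's embedded free metabelian algebra. -/
noncomputable def yGen (i : Fin m) : WreathCarrier K m :=
  (Pi.single i 1, Pi.single i 1)

/-- The element `aᵢ tⱼ` viewed in `C_m ⊆ A_m wr B_m` arises from brackets; applying
a polynomial `h(ad y_q, …, ad y_m)` in the commuting right adjoint operators
`ad y_j` to elements of `C_m` multiplies the `K[t₁,…,t_m]`-coefficients by the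
corresponding polynomial in `t₁,…,t_m`. -/
noncomputable def polyApply (h : MvPolynomial (Fin m) K) (w : WreathCarrier K m) :
    WreathCarrier K m :=
  ∑ d ∈ h.support, h.coeff d •
    (List.finRange m).foldl
      (fun acc j => (fun z : WreathCarrier K m => ⁅z, yGen K m j⁆)^[d j] acc) w

lemma tvec_single (j : Fin m) : tvec K m (Pi.single j 1) = MvPolynomial.X j := by
  simp [tvec, Pi.single_apply, apply_ite (MvPolynomial.C (σ := Fin m) (R := K))]

lemma bracket_yGen (a : Fin m → MvPolynomial (Fin m) K) (j : Fin m) :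
    ⁅((a, 0) : WreathCarrier K m), yGen K m j⁆ =
      ((fun i => a i * MvPolynomial.X j), 0) := by
  rw [wr_bracket_def]
  refine Prod.ext ?_ rfl
  funext i
  simp [yGen, tvec_single, tvec_zero]

lemma iterate_bracket_yGen (a : Fin m → MvPolynomial (Fin m) K) (j : Fin m) (n : ℕ) :
    (fun z : WreathCarrier K m => ⁅z, yGen K m j⁆)^[n] ((a, 0) : WreathCarrier K m) =
      ((fun i => a i * MvPolynomial.X j ^ n), 0) := by
  induction n generalizing a with
  | zero => simp
  | succ n ih =>
    rw [Function.iterate_succ_apply, bracket_yGen, ih]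
    refine Prod.ext ?_ rfl
    funext i
    simp only [pow_succ]
    ring

lemma foldl_bracket (d : Fin m →₀ ℕ) (a : Fin m → MvPolynomial (Fin m) K)
    (l : List (Fin m)) :
    l.foldl (fun acc j => (fun z : WreathCarrier K m => ⁅z, yGen K m j⁆)^[d j] acc)
      ((a, 0) : WreathCarrier K m) =
      ((fun i => a i * (l.map fun j => MvPolynomial.X (R := K) j ^ d j).prod), 0) := by
  induction l generalizing a with
  | nil => simp
  | cons j l ih =>
    rw [List.foldl_cons, iterate_bracket_yGen, ih]
    refine Prod.ext ?_ rfl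
    funext i
    simp [mul_assoc]

lemma polyApply_eq (hp : MvPolynomial (Fin m) K) (a : Fin m → MvPolynomial (Fin m) K) :
    polyApply K m hp ((a, 0) : WreathCarrier K m) = ((fun i => a i * hp), 0) := by
  unfold polyApply
  have key : ∀ d ∈ hp.support,
      (hp.coeff d •
        (List.finRange m).foldl
          (fun acc j => (fun z : WreathCarrier K m => ⁅z, yGen K m j⁆)^[d j] acc)
          ((a, 0) : WreathCarrier K m)) =
      ((fun i => a i * (MvPolynomial.monomial d (hp.coeff d))),
        (0 : Fin m → K)) := by
    intro d _
    rw [foldl_bracket]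
    refine Prod.ext ?_ (by simp)
    funext i
    have : ((List.finRange m).map fun j => MvPolynomial.X (R := K) j ^ d j).prod =
        ∏ j : Fin m, MvPolynomial.X (R := K) j ^ d j := by
      rw [Fin.prod_univ_def]
    simp only [Prod.smul_mk, Pi.smul_apply, this, MvPolynomial.smul_eq_C_mul]
    rw [MvPolynomial.monomial_eq, Finsupp.prod_pow]
    ring
  rw [Finset.sum_congr rfl key]
  refine Prod.ext ?_ (by simp [Prod.snd_sum])
  funext i
  rw [Prod.fst_sum, Finset.sum_apply, ← Finset.mul_sum, ← MvPolynomial.as_sum]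

/-- For `f = ∑_{p>q} [y_p, y_q]·h_{pq}(ad y_q,…,ad y_m)` in the derived subalgebra of
Shmel'kin's embedded free metabelian algebra, `f = ∑ᵢ aᵢ fᵢ` where the partial
derivative `fᵢ = ∂f/∂yᵢ` equals `∑_{q<i} t_q h_{iq} − ∑_{p>i} t_p h_{pi}`. -/
theorem partial_derivatives_of_derived_element
    (h : Fin m → Fin m → MvPolynomial (Fin m) K)
    (hsupp : ∀ p q : Fin m, h p q ∈ MvPolynomial.supported K {j : Fin m | q ≤ j}) :
    (∑ p : Fin m, ∑ q : Fin m,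
        if q < p then polyApply K m (h p q) ⁅yGen K m p, yGen K m q⁆ else 0) =
      ((fun i : Fin m =>
          (∑ q : Fin m, if q < i then MvPolynomial.X q * h i q else 0) -
            ∑ p : Fin m, if i < p then MvPolynomial.X p * h p i else 0),
        (0 : Fin m → K)) := by
  have key : ∀ p q : Fin m,
      polyApply K m (h p q) ⁅yGen K m p, yGen K m q⁆ =
      ((fun i => (Pi.single p 1 i * MvPolynomial.X q
          - Pi.single q 1 i * MvPolynomial.X p) * h p q), 0) := by
    intro p q
    have : ⁅yGen K m p, yGen K m q⁆ =
        (((fun i => Pi.single p 1 i * MvPolynomial.X q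
            - Pi.single q 1 i * MvPolynomial.X p) : Fin m → MvPolynomial (Fin m) K), 0) := by
      rw [wr_bracket_def]
      refine Prod.ext ?_ rfl
      funext i
      simp [yGen, tvec_single]
    rw [this, polyApply_eq]
  have key2 : ∀ p q : Fin m,
      (if q < p then polyApply K m (h p q) ⁅yGen K m p, yGen K m q⁆ else 0) =
      ((fun i => if q < p then (Pi.single p 1 i * MvPolynomial.X q
          - Pi.single q 1 i * MvPolynomial.X p) * h p q else 0), 0) := by
    intro p q
    split
    · rw [key]
    · exact Prod.ext (by funext i; simp) rfl
  simp only [key2]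
  refine Prod.ext ?_ (by simp [Prod.snd_sum])
  funext i
  have lhs : (∑ p : Fin m, ∑ q : Fin m,
      (((fun i => if q < p then (Pi.single (M := fun _ : Fin m => MvPolynomial (Fin m) K) p 1 i * MvPolynomial.X (R := K) q
          - Pi.single (M := fun _ : Fin m => MvPolynomial (Fin m) K) q 1 i * MvPolynomial.X (R := K) p) * h p q else 0) : Fin m → MvPolynomial (Fin m) K),
        (0 : Fin m → K))).1 i =
      ∑ p : Fin m, ∑ q : Fin m,
        (if q < p then (Pi.single (M := fun _ : Fin m => MvPolynomial (Fin m) K) p 1 i * MvPolynomial.X (R := K) q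
          - Pi.single (M := fun _ : Fin m => MvPolynomial (Fin m) K) q 1 i * MvPolynomial.X (R := K) p) * h p q else 0) := by
    simp [Prod.fst_sum, Finset.sum_apply]
  rw [lhs]
  have expand : ∀ p q : Fin m,
      (if q < p then (Pi.single (M := fun _ : Fin m => MvPolynomial (Fin m) K) p 1 i * MvPolynomial.X (R := K) q
          - Pi.single (M := fun _ : Fin m => MvPolynomial (Fin m) K) q 1 i * MvPolynomial.X (R := K) p) * h p q else 0) =
      (if p = i then (if q < p then MvPolynomial.X q * h p q else 0) else 0)
        - (if q = i then (if q < p then MvPolynomial.X p * h p q else 0) else 0) := by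
    intro p q
    by_cases hpi : p = i <;> by_cases hqi : q = i <;>
      simp [hpi, hqi, Pi.single_apply, sub_mul] <;> split <;> simp_all [lt_irrefl]
  simp only [expand, Finset.sum_sub_distrib]
  congr 1
  · have step : ∀ p : Fin m,
        (∑ q : Fin m, if p = i then (if q < p then MvPolynomial.X q * h p q else 0) else 0) =
        if p = i then (∑ q : Fin m, if q < p then MvPolynomial.X q * h p q else 0) else 0 := by
      intro p; split <;> simp
    simp only [step, Finset.sum_ite_eq', Finset.mem_univ, if_true]
  · simp only [Finset.sum_ite_eq', Finset.mem_univ, if_true]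
end

section
/- Let L be a nilpotent-of-class-c metabelian Lie algebra over a field of characteristic 0, and u = ū + u₀ with u₀ ∈ [L,L]. Then for every y ∈ L: exp(ad u)(y) = y + [y,u]·∑_{k=0}^{c-2} (ad ū)^k/(k+1)!. In particular exp(ad u)(y) = exp(ad ū)(y) + [y,u₀]·∑_{k=0}^{c-2} (ad ū)^k/(k+1)!. -/
/-- The right adjoint action `adr x : u ↦ ⁅u, x⁆`. -/
noncomputable def adr (K : Type*) (L : Type*) [Field K] [LieRing L] [LieAlgebra K L]
    (x : L) : Module.End K L := -(LieAlgebra.ad K L x)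

theorem adr_apply (K : Type*) (L : Type*) [Field K] [LieRing L] [LieAlgebra K L]
    (x z : L) : adr K L x z = ⁅z, x⁆ := by
  rw [adr, LinearMap.neg_apply, LieAlgebra.ad_apply, lie_skew]

/-- In a metabelian nilpotent-of-class-`c` Lie algebra, for `u = ū + u₀` with `u₀` in
the commutator ideal and every `y ∈ L`:
`exp(ad u)(y) = y + [y,u]·∑_{k=0}^{c-2} (ad ū)^k/(k+1)!`, and consequently
`exp(ad u)(y) = exp(ad ū)(y) + [y,u₀]·∑_{k=0}^{c-2} (ad ū)^k/(k+1)!`. -/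
theorem exp_ad_decomposition
    (K : Type*) (L : Type*) [Field K] [CharZero K] [LieRing L] [LieAlgebra K L]
    (hmet : ∀ a b c d : L, ⁅⁅a, b⁆, ⁅c, d⁆⁆ = 0)
    (c : ℕ) (hnil : LieModule.lowerCentralSeries K L L c = ⊥)
    (u ubar u0 : L) (hu : u = ubar + u0)
    (hu0 : u0 ∈ ⁅(⊤ : LieIdeal K L), (⊤ : LieIdeal K L)⁆) (y : L) :
    (∑ k ∈ Finset.range c, (k.factorial : K)⁻¹ • (((adr K L u) ^ k) y)) =
        y + ∑ k ∈ Finset.range (c - 1),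
          ((k + 1).factorial : K)⁻¹ • (((adr K L ubar) ^ k) ⁅y, u⁆) ∧
      (∑ k ∈ Finset.range c, (k.factorial : K)⁻¹ • (((adr K L u) ^ k) y)) =
        (∑ k ∈ Finset.range c, (k.factorial : K)⁻¹ • (((adr K L ubar) ^ k) y)) +
          ∑ k ∈ Finset.range (c - 1),
            ((k + 1).factorial : K)⁻¹ • (((adr K L ubar) ^ k) ⁅y, u0⁆) := by
  set D : LieIdeal K L := ⁅(⊤ : LieIdeal K L), (⊤ : LieIdeal K L)⁆ with hD
  -- elements of D lie in the span of brackets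
  have hDspan : ∀ z : L, z ∈ D →
      z ∈ Submodule.span K {m : L | ∃ a b : L, ⁅a, b⁆ = m} := by
    intro z hz
    have h1 : z ∈ Submodule.span K
        {m : L | ∃ x ∈ (⊤ : LieIdeal K L), ∃ n ∈ (⊤ : LieIdeal K L), ⁅x, n⁆ = m} := by
      rw [← LieSubmodule.lieIdeal_oper_eq_linear_span']
      exact hz
    refine Submodule.span_mono ?_ h1
    rintro m ⟨a, -, b, -, rfl⟩; exact ⟨a, b, rfl⟩
  -- brackets of two elements of D vanish
  have hann : ∀ z ∈ D, ∀ w ∈ D, ⁅z, w⁆ = 0 := by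
    intro z hz w hw
    refine Submodule.span_induction ?_ ?_ ?_ ?_ (hDspan z hz)
    · rintro x ⟨a, b, rfl⟩
      refine Submodule.span_induction ?_ ?_ ?_ ?_ (hDspan w hw)
      · rintro x' ⟨e, f, rfl⟩; exact hmet a b e f
      · simp
      · intro x' y' _ _ h1 h2; rw [lie_add, h1, h2, add_zero]
      · intro t x' _ h1; rw [lie_smul, h1, smul_zero]
    · simp
    · intro x' y' _ _ h1 h2; rw [add_lie, h1, h2, add_zero]
    · intro t x' _ h1; rw [smul_lie, h1, smul_zero]
  -- on D, adr u agrees with adr ubar and preserves D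
  have hstep : ∀ z ∈ D, adr K L u z = adr K L ubar z ∧ adr K L ubar z ∈ D := by
    intro z hz
    constructor
    · rw [adr_apply, adr_apply, hu, lie_add, hann z hz u0 hu0, add_zero]
    · rw [adr_apply, ← lie_skew]
      exact D.neg_mem (D.lie_mem hz)
  have hiter : ∀ k : ℕ, ∀ z ∈ D,
      ((adr K L u) ^ k) z = ((adr K L ubar) ^ k) z ∧ ((adr K L ubar) ^ k) z ∈ D := by
    intro k
    induction k with
    | zero => intro z hz; simpa using hz
    | succ n ih =>
      intro z hz
      have h1 := hstep z hz
      have h2 := ih _ h1.2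
      rw [pow_succ, pow_succ]
      simp only [Module.End.mul_apply]
      rw [h1.1]
      exact h2
  have hyuD : ⁅y, u⁆ ∈ D :=
    LieSubmodule.lie_mem_lie (LieSubmodule.mem_top y) (LieSubmodule.mem_top u)
  have hkey : ∀ k : ℕ, ((adr K L u) ^ (k + 1)) y = ((adr K L ubar) ^ k) ⁅y, u⁆ := by
    intro k
    rw [pow_succ, Module.End.mul_apply, adr_apply]
    exact (hiter k _ hyuD).1
  have hkey2 : ∀ x : L, ∀ k : ℕ,
      ((adr K L ubar) ^ (k + 1)) x = ((adr K L ubar) ^ k) ⁅x, ubar⁆ := by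
    intro x k
    rw [pow_succ, Module.End.mul_apply, adr_apply]
  rcases c with _ | c'
  · -- c = 0 : L = ⊥, so y = 0
    have : y ∈ (⊥ : LieIdeal K L) := by
      rw [← hnil]; simp [LieModule.lowerCentralSeries]
    rw [LieSubmodule.mem_bot] at this
    subst this
    simp
  · have hsum1 : (∑ k ∈ Finset.range (c' + 1), (k.factorial : K)⁻¹ • (((adr K L u) ^ k) y)) =
        y + ∑ k ∈ Finset.range c',
          ((k + 1).factorial : K)⁻¹ • (((adr K L ubar) ^ k) ⁅y, u⁆) := by
      rw [Finset.sum_range_succ']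
      simp only [hkey]
      simp [add_comm]
    have hsum2 : (∑ k ∈ Finset.range (c' + 1), (k.factorial : K)⁻¹ • (((adr K L ubar) ^ k) y)) =
        y + ∑ k ∈ Finset.range c',
          ((k + 1).factorial : K)⁻¹ • (((adr K L ubar) ^ k) ⁅y, ubar⁆) := by
      rw [Finset.sum_range_succ']
      simp only [hkey2]
      simp [add_comm]
    have hsplit : ∀ k : ℕ, ((adr K L ubar) ^ k) ⁅y, u⁆ =
        ((adr K L ubar) ^ k) ⁅y, ubar⁆ + ((adr K L ubar) ^ k) ⁅y, u0⁆ := by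
      intro k
      rw [hu, lie_add, map_add]
    refine ⟨by simpa using hsum1, ?_⟩
    rw [hsum1, hsum2]
    simp only [hsplit, smul_add, Finset.sum_add_distrib]
    abel
end
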